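/- Let m ∈ ℕ and T > 0. Let f : [0,T] → V be m times continuously differentiable and let u : [0,T] → V be (m+2) times continuously differentiable and satisfy M u^{(m+2)}(t) + K u^{(m)}(t) = M f^{(m)}(t) for all t ∈ [0,T]. Then for every t ∈ [0,T], |u^{(m+1)}(t)|_M + |u^{(m)}(t)|_K ≤ 2√2 ( |u^{(m+1)}(0)|_M + |u^{(m)}(0)|_K + 2 ∫₀^T |f^{(m)}(s)|_M ds ). -/

import Mathlib

open scoped RealInnerProductSpace

/-- The (semi)norm `|v|_A := ⟨A v, v⟩^{1/2}` induced by a (positive semidefinite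
self-adjoint) linear operator `A`. -/
noncomputable def opSemiNorm {V : Type*} [NormedAddCommGroup V] [InnerProductSpace ℝ V]
    (A : V →ₗ[ℝ] V) (v : V) : ℝ :=
  Real.sqrt ⟪A v, v⟫

/-- Cauchy–Schwarz for the semi-inner-product induced by a PSD self-adjoint operator. -/
lemma psd_cauchy_schwarz {V : Type*} [NormedAddCommGroup V] [InnerProductSpace ℝ V]
    (A : V →ₗ[ℝ] V) (hsa : ∀ x y : V, ⟪A x, y⟫ = ⟪x, A y⟫)
    (hpsd : ∀ x : V, 0 ≤ ⟪A x, x⟫) (x y : V) :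
    ⟪A x, y⟫ ≤ Real.sqrt ⟪A x, x⟫ * Real.sqrt ⟪A y, y⟫ := by
  have hsym : ∀ a b : V, ⟪A a, b⟫ = ⟪A b, a⟫ := by
    intro a b; rw [hsa]; exact real_inner_comm _ _
  have hquad : ∀ t : ℝ, 0 ≤ ⟪A y, y⟫ * (t * t) + (2 * ⟪A x, y⟫) * t + ⟪A x, x⟫ := by
    intro t
    have h := hpsd (x + t • y)
    have hexp : ⟪A (x + t • y), x + t • y⟫ =
        ⟪A y, y⟫ * (t * t) + (2 * ⟪A x, y⟫) * t + ⟪A x, x⟫ := by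
      rw [map_add, map_smul, inner_add_left, inner_add_right, inner_add_right]
      rw [real_inner_smul_right, real_inner_smul_right]
      have : ⟪(t • A y : V), x⟫ = t * ⟪A y, x⟫ := real_inner_smul_left _ _ _
      rw [this, show ⟪(t • A y : V), y⟫ = t * ⟪A y, y⟫ from real_inner_smul_left _ _ _]
      rw [hsym y x]
      ring
    linarith [hexp ▸ h]
  have hdisc : discrim ⟪A y, y⟫ (2 * ⟪A x, y⟫) ⟪A x, x⟫ ≤ 0 := discrim_le_zero hquad
  rw [discrim] at hdisc
  have hsq : ⟪A x, y⟫ ^ 2 ≤ ⟪A x, x⟫ * ⟪A y, y⟫ := by nlinarith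
  calc ⟪A x, y⟫ ≤ Real.sqrt (⟪A x, y⟫ ^ 2) := by
        rw [Real.sqrt_sq_eq_abs]; exact le_abs_self _
    _ ≤ Real.sqrt (⟪A x, x⟫ * ⟪A y, y⟫) := Real.sqrt_le_sqrt hsq
    _ = Real.sqrt ⟪A x, x⟫ * Real.sqrt ⟪A y, y⟫ := Real.sqrt_mul (hpsd x) _

set_option maxHeartbeats 1000000 in
/-- regularity estimate (Lemma 3.1 of the paper): if
`M u^{(m+2)} + K u^{(m)} = M f^{(m)}` on `[0,T]`, then
`|u^{(m+1)}(t)|_M + |u^{(m)}(t)|_K ≤ 2√2 (|u^{(m+1)}(0)|_M + |u^{(m)}(0)|_K + 2∫₀^T |f^{(m)}|_M)`. -/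
theorem stmt1 {V : Type*} [NormedAddCommGroup V] [InnerProductSpace ℝ V]
    [FiniteDimensional ℝ V]
    (M K : V →ₗ[ℝ] V)
    (hMsa : ∀ x y : V, ⟪M x, y⟫ = ⟪x, M y⟫)
    (hMpd : ∀ x : V, x ≠ 0 → 0 < ⟪M x, x⟫)
    (hKsa : ∀ x y : V, ⟪K x, y⟫ = ⟪x, K y⟫)
    (hKpsd : ∀ x : V, 0 ≤ ⟪K x, x⟫)
    (m : ℕ) (T : ℝ) (hT : 0 < T)
    (f u : ℝ → V)
    (hf : ContDiff ℝ m f) (hu : ContDiff ℝ (m + 2) u)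
    (heq : ∀ t ∈ Set.Icc (0 : ℝ) T,
      M (iteratedDeriv (m + 2) u t) + K (iteratedDeriv m u t) = M (iteratedDeriv m f t)) :
    ∀ t ∈ Set.Icc (0 : ℝ) T,
      opSemiNorm M (iteratedDeriv (m + 1) u t) + opSemiNorm K (iteratedDeriv m u t) ≤
        2 * Real.sqrt 2 *
          (opSemiNorm M (iteratedDeriv (m + 1) u 0) + opSemiNorm K (iteratedDeriv m u 0) +
            2 * ∫ s in (0 : ℝ)..T, opSemiNorm M (iteratedDeriv m f s)) := by
  have hMpsd : ∀ x : V, 0 ≤ ⟪M x, x⟫ := by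
    intro x
    rcases eq_or_ne x 0 with h | h
    · simp [h]
    · exact (hMpd x h).le
  set w := iteratedDeriv (m + 1) u with hw_def
  set v := iteratedDeriv m u with hv_def
  set aF := iteratedDeriv (m + 2) u with haF_def
  set g0 := iteratedDeriv m f with hg0_def
  -- differentiability of iterated derivatives
  have huW : Differentiable ℝ w := by
    apply hu.differentiable_iteratedDeriv (m + 1)
    exact_mod_cast Nat.lt_succ_self (m + 1)
  have huV : Differentiable ℝ v := by
    apply hu.differentiable_iteratedDeriv m
    exact_mod_cast Nat.lt_add_of_pos_right (by norm_num)
  have hw' : ∀ t : ℝ, HasDerivAt w (aF t) t := by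
    intro t
    have h := (huW t).hasDerivAt
    have : aF t = deriv w t := by rw [haF_def, hw_def, iteratedDeriv_succ]
    rw [this]; exact h
  have hv' : ∀ t : ℝ, HasDerivAt v (w t) t := by
    intro t
    have h := (huV t).hasDerivAt
    have : w t = deriv v t := by rw [hw_def, hv_def, iteratedDeriv_succ]
    rw [this]; exact h
  set Mc := LinearMap.toContinuousLinearMap M with hMc
  set Kc := LinearMap.toContinuousLinearMap K with hKc
  have hMw : ∀ t : ℝ, HasDerivAt (fun t => M (w t)) (M (aF t)) t := by
    intro t
    have h := (Mc.hasFDerivAt.comp t (hw' t).hasFDerivAt).hasDerivAt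
    simpa [hMc, Function.comp_def] using h
  have hKv : ∀ t : ℝ, HasDerivAt (fun t => K (v t)) (K (w t)) t := by
    intro t
    have h := (Kc.hasFDerivAt.comp t (hv' t).hasFDerivAt).hasDerivAt
    simpa [hKc, Function.comp_def] using h
  -- the energy
  set E : ℝ → ℝ := fun t => ⟪M (w t), w t⟫ + ⟪K (v t), v t⟫ with hE_def
  have hEnonneg : ∀ t, 0 ≤ E t := fun t => add_nonneg (hMpsd _) (hKpsd _)
  have hE' : ∀ t : ℝ,
      HasDerivAt E (2 * ⟪M (aF t), w t⟫ + 2 * ⟪K (v t), w t⟫) t := by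
    intro t
    have h1 : HasDerivAt (fun t => ⟪M (w t), w t⟫)
        (⟪M (w t), aF t⟫ + ⟪M (aF t), w t⟫) t := (hMw t).inner ℝ (hw' t)
    have h2 : HasDerivAt (fun t => ⟪K (v t), v t⟫)
        (⟪K (v t), w t⟫ + ⟪K (w t), v t⟫) t := (hKv t).inner ℝ (hv' t)
    have e1 : ⟪M (w t), aF t⟫ = ⟪M (aF t), w t⟫ := by
      rw [hMsa]; exact real_inner_comm _ _
    have e2 : ⟪K (w t), v t⟫ = ⟪K (v t), w t⟫ := by
      rw [hKsa]; exact real_inner_comm _ _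
    have h := h1.add h2
    rw [e1] at h; rw [e2] at h
    exact h.congr_deriv (by ring)
  -- the forcing seminorm
  set g : ℝ → ℝ := fun s => Real.sqrt ⟪M (g0 s), g0 s⟫ with hg_def
  have hg0cont : Continuous g0 := hf.continuous_iteratedDeriv m le_rfl
  have hgcont : Continuous g := by
    apply Real.continuous_sqrt.comp
    exact Continuous.inner (Mc.continuous.comp hg0cont) hg0cont
  have hgnonneg : ∀ s, 0 ≤ g s := fun s => Real.sqrt_nonneg _
  -- the energy derivative bound on [0, T]
  have hbound : ∀ t ∈ Set.Icc (0 : ℝ) T,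
      2 * ⟪M (aF t), w t⟫ + 2 * ⟪K (v t), w t⟫ ≤ 2 * g t * Real.sqrt (E t) := by
    intro t ht
    have hsum : ⟪M (aF t), w t⟫ + ⟪K (v t), w t⟫ = ⟪M (g0 t), w t⟫ := by
      rw [← inner_add_left, heq t ht]
    have hcs : ⟪M (g0 t), w t⟫ ≤ g t * Real.sqrt ⟪M (w t), w t⟫ :=
      psd_cauchy_schwarz M hMsa hMpsd _ _
    have hle : Real.sqrt ⟪M (w t), w t⟫ ≤ Real.sqrt (E t) :=
      Real.sqrt_le_sqrt (by simp only [hE_def]; linarith [hKpsd (v t)])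
    have : ⟪M (g0 t), w t⟫ ≤ g t * Real.sqrt (E t) :=
      hcs.trans (mul_le_mul_of_nonneg_left hle (hgnonneg t))
    linarith [hsum ▸ this]
  -- Gronwall-type argument
  have key : ∀ t ∈ Set.Icc (0 : ℝ) T,
      Real.sqrt (E t) ≤ Real.sqrt (E 0) + ∫ s in (0 : ℝ)..T, g s := by
    intro t ht
    refine le_of_forall_pos_le_add ?_
    intro ε hε
    set G : ℝ → ℝ := fun t => ∫ s in (0 : ℝ)..t, g s with hG_def
    have hG' : ∀ t : ℝ, HasDerivAt G (g t) t := by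
      intro t
      exact intervalIntegral.integral_hasDerivAt_right
        (hgcont.intervalIntegrable _ _)
        hgcont.aestronglyMeasurable.stronglyMeasurableAtFilter
        hgcont.continuousAt
    have hpos : ∀ s : ℝ, 0 < E s + ε ^ 2 := by
      intro s; have := hEnonneg s; positivity
    set φ : ℝ → ℝ := fun s => Real.sqrt (E s + ε ^ 2) with hφ_def
    have hφ' : ∀ s : ℝ, HasDerivAt φ
        (1 / (2 * Real.sqrt (E s + ε ^ 2)) *
          (2 * ⟪M (aF s), w s⟫ + 2 * ⟪K (v s), w s⟫)) s := by
      intro s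
      exact (Real.hasDerivAt_sqrt (hpos s).ne').comp s ((hE' s).add_const (ε ^ 2))
    set ψ : ℝ → ℝ := fun s => φ s - G s with hψ_def
    have hψ' : ∀ s : ℝ, HasDerivAt ψ
        (1 / (2 * Real.sqrt (E s + ε ^ 2)) *
          (2 * ⟪M (aF s), w s⟫ + 2 * ⟪K (v s), w s⟫) - g s) s :=
      fun s => (hφ' s).sub (hG' s)
    have hψdiff : Differentiable ℝ ψ := fun s => (hψ' s).differentiableAt
    have hanti : AntitoneOn ψ (Set.Icc 0 T) := by
      apply antitoneOn_of_deriv_nonpos (convex_Icc 0 T)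
        hψdiff.continuous.continuousOn hψdiff.differentiableOn
      intro x hx
      rw [interior_Icc] at hx
      rw [(hψ' x).deriv]
      have hxIcc : x ∈ Set.Icc (0 : ℝ) T := ⟨hx.1.le, hx.2.le⟩
      have hb := hbound x hxIcc
      set P := Real.sqrt (E x + ε ^ 2) with hP
      have hPpos : 0 < P := Real.sqrt_pos.mpr (hpos x)
      have hQP : Real.sqrt (E x) ≤ P :=
        Real.sqrt_le_sqrt (by nlinarith)
      have h1 : 2 * ⟪M (aF x), w x⟫ + 2 * ⟪K (v x), w x⟫ ≤ 2 * g x * P := by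
        have : 2 * g x * Real.sqrt (E x) ≤ 2 * g x * P := by
          apply mul_le_mul_of_nonneg_left hQP
          have := hgnonneg x; linarith
        linarith
      rw [sub_nonpos]
      calc 1 / (2 * P) * (2 * ⟪M (aF x), w x⟫ + 2 * ⟪K (v x), w x⟫)
          ≤ 1 / (2 * P) * (2 * g x * P) := by
            apply mul_le_mul_of_nonneg_left h1; positivity
        _ = g x := by field_simp
    have h0T : (0 : ℝ) ∈ Set.Icc (0 : ℝ) T := ⟨le_refl 0, hT.le⟩
    have hψle : ψ t ≤ ψ 0 := hanti h0T ht ht.1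
    have hψ0 : ψ 0 = φ 0 := by
      simp [hψ_def, hG_def, intervalIntegral.integral_same]
    have hGle : G t ≤ G T := by
      apply intervalIntegral.integral_mono_interval le_rfl ht.1 ht.2
      · exact Filter.Eventually.of_forall fun x => hgnonneg x
      · exact hgcont.intervalIntegrable _ _
    have hstep1 : Real.sqrt (E t) ≤ φ t := by
      apply Real.sqrt_le_sqrt; nlinarith
    have hstep2 : φ 0 ≤ Real.sqrt (E 0) + ε := by
      have h1 : E 0 + ε ^ 2 ≤ (Real.sqrt (E 0) + ε) ^ 2 := by
        nlinarith [Real.sq_sqrt (hEnonneg 0), Real.sqrt_nonneg (E 0), hε.le]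
      calc φ 0 ≤ Real.sqrt ((Real.sqrt (E 0) + ε) ^ 2) := Real.sqrt_le_sqrt h1
        _ = Real.sqrt (E 0) + ε := Real.sqrt_sq (by positivity)
    have : φ t ≤ φ 0 + G t := by
      have : ψ t ≤ φ 0 := hψ0 ▸ hψle
      simp only [hψ_def] at this; linarith
    linarith
  -- conclude
  intro t ht
  have hk := key t ht
  set A := opSemiNorm M (w t) with hA
  set B := opSemiNorm K (v t) with hB
  set A0 := opSemiNorm M (w 0) with hA0
  set B0 := opSemiNorm K (v 0) with hB0
  set I := ∫ s in (0 : ℝ)..T, g s with hI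
  have hInn : (∫ s in (0 : ℝ)..T, opSemiNorm M (g0 s)) = I := by
    simp only [hI, opSemiNorm, hg_def]
  have hAnn : 0 ≤ A := Real.sqrt_nonneg _
  have hBnn : 0 ≤ B := Real.sqrt_nonneg _
  have hA0nn : 0 ≤ A0 := Real.sqrt_nonneg _
  have hB0nn : 0 ≤ B0 := Real.sqrt_nonneg _
  have hInn' : 0 ≤ I := by
    rw [hI]
    exact intervalIntegral.integral_nonneg hT.le fun s _ => hgnonneg s
  have hA2 : A ^ 2 = ⟪M (w t), w t⟫ := Real.sq_sqrt (hMpsd _)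
  have hB2 : B ^ 2 = ⟪K (v t), v t⟫ := Real.sq_sqrt (hKpsd _)
  have hA02 : A0 ^ 2 = ⟪M (w 0), w 0⟫ := Real.sq_sqrt (hMpsd _)
  have hB02 : B0 ^ 2 = ⟪K (v 0), v 0⟫ := Real.sq_sqrt (hKpsd _)
  have hEt : E t = A ^ 2 + B ^ 2 := by rw [hA2, hB2]
  have hE0 : E 0 = A0 ^ 2 + B0 ^ 2 := by rw [hA02, hB02]
  have hsqrt2 : (0 : ℝ) ≤ Real.sqrt 2 := Real.sqrt_nonneg 2
  -- A + B ≤ √2 √(E t)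
  have hAB : A + B ≤ Real.sqrt 2 * Real.sqrt (E t) := by
    have h1 : (A + B) ^ 2 ≤ 2 * E t := by rw [hEt]; nlinarith [sq_nonneg (A - B)]
    calc A + B = Real.sqrt ((A + B) ^ 2) := (Real.sqrt_sq (by positivity)).symm
      _ ≤ Real.sqrt (2 * E t) := Real.sqrt_le_sqrt h1
      _ = Real.sqrt 2 * Real.sqrt (E t) := Real.sqrt_mul (by norm_num) _
  -- √(E 0) ≤ A0 + B0
  have hE0le : Real.sqrt (E 0) ≤ A0 + B0 := by
    have h1 : E 0 ≤ (A0 + B0) ^ 2 := by rw [hE0]; nlinarith [mul_nonneg hA0nn hB0nn]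
    calc Real.sqrt (E 0) ≤ Real.sqrt ((A0 + B0) ^ 2) := Real.sqrt_le_sqrt h1
      _ = A0 + B0 := Real.sqrt_sq (by positivity)
  rw [hInn]
  have hchain : A + B ≤ Real.sqrt 2 * (A0 + B0 + I) := by
    calc A + B ≤ Real.sqrt 2 * Real.sqrt (E t) := hAB
      _ ≤ Real.sqrt 2 * (Real.sqrt (E 0) + I) := mul_le_mul_of_nonneg_left hk hsqrt2
      _ ≤ Real.sqrt 2 * (A0 + B0 + I) := by
          apply mul_le_mul_of_nonneg_left _ hsqrt2; linarith
  have hfinal : Real.sqrt 2 * (A0 + B0 + I) ≤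
      2 * Real.sqrt 2 * (A0 + B0 + 2 * I) := by
    nlinarith [mul_nonneg hsqrt2 (by linarith : (0:ℝ) ≤ A0 + B0 + 3 * I)]
  linarith
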